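/- Let {A, B_i, C_i; m} be an n-dimensional jointly controllable and jointly observable continuous-time m-channel linear system with strongly connected neighbor graph N (with self-loops). Define the extended system with n_i-dimensional integrators ż_i = v_i at each channel, with coefficient matrices Ā = diag(A, 0), B̄_i = diag(B_i, E_i), C̄_i = diag(C_i, E_{N_i}'). If n_i ≥ n − min over subsets s ⊂ {1,...,m} and λ ∈ σ(A) of rank [λI_n − A, B_s; C_{m−s}, 0] for all i, then the extended system has no fixed spectrum; that is, for every λ ∈ ℂ and every subset s ⊆ {1,...,m}, rank [λI − Ā, B̄_s; C̄_{m−s}, 0] ≥ n̄ where n̄ = n + Σ_i n_i. -/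

import Mathlib

open Matrix Complex

noncomputable section

variable {n m : ℕ}

/-- Fixed-mode pencil `[λI − A, B_s; C_{m−s}, 0]` of the original system, in a
rank-equivalent form: the columns of `B_i` for `i ∉ s` and the rows of `C_i`
for `i ∈ s` are set to zero (zero columns/rows do not affect the rank). -/
def pencil (p q : Fin m → ℕ)
    (A : Matrix (Fin n) (Fin n) ℝ)
    (B : ∀ i, Matrix (Fin n) (Fin (p i)) ℝ)
    (C : ∀ i, Matrix (Fin (q i)) (Fin n) ℝ)
    (lam : ℂ) (s : Finset (Fin m)) :
    Matrix (Fin n ⊕ Σ i, Fin (q i)) (Fin n ⊕ Σ i, Fin (p i)) ℂ :=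
  fromBlocks (lam • 1 - A.map ofReal)
    (fun r c => if c.1 ∈ s then ofReal ((B c.1) r c.2) else 0)
    (fun r c => if r.1 ∈ s then 0 else ofReal ((C r.1) r.2 c))
    0

/-- The block column `E_i` selecting the `i`-th integrator block. -/
def Eblk (nd : Fin m → ℕ) (i : Fin m) :
    Matrix (Σ j, Fin (nd j)) (Fin (nd i)) ℂ :=
  fun r c => if h : r.1 = i then (if h ▸ r.2 = c then 1 else 0) else 0

/-- The selector `E_t` (as a square matrix with identity blocks on positions in
`t` and zeros elsewhere; its rank is `Σ_{i ∈ t} n_i`). -/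
def Esel (nd : Fin m → ℕ) (t : Finset (Fin m)) :
    Matrix (Σ j, Fin (nd j)) (Σ j, Fin (nd j)) ℂ :=
  fun r c => if r = c ∧ r.1 ∈ t then 1 else 0

/-- `Ā = diag(A, 0)` of the extended system. -/
def Abar (nd : Fin m → ℕ) (A : Matrix (Fin n) (Fin n) ℝ) :
    Matrix (Fin n ⊕ Σ j, Fin (nd j)) (Fin n ⊕ Σ j, Fin (nd j)) ℂ :=
  fromBlocks (A.map ofReal) 0 0 0

/-- `B̄_i = diag(B_i, E_i)`. -/
def Bbar (p nd : Fin m → ℕ) (B : ∀ i, Matrix (Fin n) (Fin (p i)) ℝ) (i : Fin m) :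
    Matrix (Fin n ⊕ Σ j, Fin (nd j)) (Fin (p i) ⊕ Fin (nd i)) ℂ :=
  fromBlocks ((B i).map ofReal) 0 0 (Eblk nd i)

/-- `C̄_i = diag(C_i, E_{N_i}')`. -/
def Cbar (q nd : Fin m → ℕ) (C : ∀ i, Matrix (Fin (q i)) (Fin n) ℝ)
    (N : Fin m → Finset (Fin m)) (i : Fin m) :
    Matrix (Fin (q i) ⊕ Σ j, Fin (nd j)) (Fin n ⊕ Σ j, Fin (nd j)) ℂ :=
  fromBlocks ((C i).map ofReal) 0 0 (Esel nd (N i))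

/-- Fixed-mode pencil of the extended system (same zeroing convention for the
channel subset `s`). -/
def extPencil (p q nd : Fin m → ℕ)
    (A : Matrix (Fin n) (Fin n) ℝ)
    (B : ∀ i, Matrix (Fin n) (Fin (p i)) ℝ)
    (C : ∀ i, Matrix (Fin (q i)) (Fin n) ℝ)
    (N : Fin m → Finset (Fin m))
    (lam : ℂ) (s : Finset (Fin m)) :
    Matrix ((Fin n ⊕ Σ j, Fin (nd j)) ⊕ Σ i, (Fin (q i) ⊕ Σ j, Fin (nd j)))
      ((Fin n ⊕ Σ j, Fin (nd j)) ⊕ Σ i, (Fin (p i) ⊕ Fin (nd i))) ℂ :=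
  fromBlocks (lam • 1 - Abar nd A)
    (fun r c => if c.1 ∈ s then Bbar p nd B c.1 r c.2 else 0)
    (fun r c => if r.1 ∈ s then 0 else Cbar q nd C N r.1 r.2 c)
    0

end

open Module Matrix Complex
set_option linter.unusedSectionVars false
set_option maxHeartbeats 1000000

section helpers
variable {R₁ R₂ C₁ C₂ : Type*} [Fintype R₁] [Fintype R₂] [Fintype C₁] [Fintype C₂]
  [DecidableEq C₁] [DecidableEq C₂]

def extL : (R₁ → ℂ) →ₗ[ℂ] (R₁ ⊕ R₂ → ℂ) where
  toFun x := Sum.elim x 0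
  map_add' x y := by funext r; cases r <;> simp
  map_smul' c x := by funext r; cases r <;> simp

def extR : (R₂ → ℂ) →ₗ[ℂ] (R₁ ⊕ R₂ → ℂ) where
  toFun x := Sum.elim 0 x
  map_add' x y := by funext r; cases r <;> simp
  map_smul' c x := by funext r; cases r <;> simp

lemma extL_inj : Function.Injective (extL (R₁ := R₁) (R₂ := R₂)) := by
  intro x y h; funext r; exact congrFun h (Sum.inl r)

lemma extR_inj : Function.Injective (extR (R₁ := R₁) (R₂ := R₂)) := by
  intro x y h; funext r; exact congrFun h (Sum.inr r)

lemma rank_fromBlocks_diag_ge (X : Matrix R₁ C₁ ℂ) (S : Matrix R₂ C₂ ℂ) :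
    X.rank + S.rank ≤ (fromBlocks X 0 0 S).rank := by
  classical
  set f := (fromBlocks X 0 0 S).mulVecLin
  set U : Submodule ℂ (R₁ ⊕ R₂ → ℂ) := (LinearMap.range X.mulVecLin).map extL
  set W : Submodule ℂ (R₁ ⊕ R₂ → ℂ) := (LinearMap.range S.mulVecLin).map extR
  have hU : U ≤ LinearMap.range f := by
    rintro _ ⟨_, ⟨v, rfl⟩, rfl⟩
    refine ⟨Sum.elim v 0, ?_⟩
    show (fromBlocks X 0 0 S) *ᵥ (Sum.elim v 0) = _
    rw [fromBlocks_mulVec]; simp [extL]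
  have hW : W ≤ LinearMap.range f := by
    rintro _ ⟨_, ⟨v, rfl⟩, rfl⟩
    refine ⟨Sum.elim 0 v, ?_⟩
    show (fromBlocks X 0 0 S) *ᵥ (Sum.elim 0 v) = _
    rw [fromBlocks_mulVec]; simp [extR]
  have hdisj : U ⊓ W = ⊥ := by
    rw [eq_bot_iff]
    rintro x ⟨hxU, hxW⟩
    obtain ⟨-, ⟨u, rfl⟩, rfl⟩ := hxU
    obtain ⟨-, ⟨w, rfl⟩, hw⟩ := hxW
    simp only [Submodule.mem_bot]
    funext r
    cases r with
    | inl a => have h := congrFun hw (Sum.inl a); simpa [extL, extR] using h.symm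
    | inr b => simp [extL]
  have hUr : finrank ℂ U = X.rank := by
    rw [Matrix.rank]
    exact (LinearEquiv.finrank_eq (Submodule.equivMapOfInjective _ extL_inj _)).symm
  have hWr : finrank ℂ W = S.rank := by
    rw [Matrix.rank]
    exact (LinearEquiv.finrank_eq (Submodule.equivMapOfInjective _ extR_inj _)).symm
  have key := Submodule.finrank_sup_add_finrank_inf_eq U W
  rw [hdisj, finrank_bot, add_zero, hUr, hWr] at key
  calc X.rank + S.rank = finrank ℂ ↑(U ⊔ W) := key.symm
    _ ≤ finrank ℂ ↑(LinearMap.range f) := Submodule.finrank_mono (sup_le hU hW)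
    _ = (fromBlocks X 0 0 S).rank := rfl

lemma my_rank_submatrix_le {R C R' C' : Type*} [Fintype R] [Fintype C] [Fintype R'] [Fintype C']
    [DecidableEq R] [DecidableEq C]
    (M : Matrix R C ℂ) (f : R' → R) (g : C' → C) :
    (M.submatrix f g).rank ≤ M.rank := by
  have h : M.submatrix f g
      = ((1 : Matrix R R ℂ).submatrix f id) * M * ((1 : Matrix C C ℂ).submatrix id g) := by
    ext i j
    simp [mul_apply, one_apply, Finset.sum_ite_eq, Finset.sum_ite_eq']
  rw [h]
  exact le_trans (Matrix.rank_mul_le_left _ _) (Matrix.rank_mul_le_right _ _)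

end helpers


variable {n m : ℕ}

lemma Eblk_apply (nd : Fin m → ℕ) (i : Fin m) (z : Σ j, Fin (nd j)) (c : Fin (nd i)) :
    Eblk nd i z c = if z = ⟨i, c⟩ then 1 else 0 := by
  obtain ⟨j, k⟩ := z
  unfold Eblk
  by_cases h : j = i
  · subst h; simp [Sigma.mk.inj_iff]
  · simp [h, Sigma.mk.inj_iff]


lemma extPencil_eq (p q nd : Fin m → ℕ) (A : Matrix (Fin n) (Fin n) ℝ)
    (B : ∀ i, Matrix (Fin n) (Fin (p i)) ℝ) (C : ∀ i, Matrix (Fin (q i)) (Fin n) ℝ)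
    (N : Fin m → Finset (Fin m)) (lam : ℂ) (s : Finset (Fin m)) :
    extPencil p q nd A B C N lam s = fromBlocks (lam • 1 - Abar nd A)
      (of fun r c => if c.1 ∈ s then Bbar p nd B c.1 r c.2 else 0)
      (of fun r c => if r.1 ∈ s then 0 else Cbar q nd C N r.1 r.2 c)
      0 := rfl

lemma pencil_eq (p q : Fin m → ℕ) (A : Matrix (Fin n) (Fin n) ℝ)
    (B : ∀ i, Matrix (Fin n) (Fin (p i)) ℝ) (C : ∀ i, Matrix (Fin (q i)) (Fin n) ℝ)
    (lam : ℂ) (s : Finset (Fin m)) :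
    pencil p q A B C lam s = fromBlocks (lam • 1 - A.map ofReal)
      (of fun r c => if c.1 ∈ s then ofReal ((B c.1) r c.2) else 0)
      (of fun r c => if r.1 ∈ s then 0 else ofReal ((C r.1) r.2 c))
      0 := rfl

lemma Esel_apply (nd : Fin m → ℕ) (t : Finset (Fin m)) r c :
    Esel nd t r c = if r = c ∧ r.1 ∈ t then 1 else 0 := rfl

lemma hsubmx (p q nd : Fin m → ℕ)
    (A : Matrix (Fin n) (Fin n) ℝ)
    (B : ∀ i, Matrix (Fin n) (Fin (p i)) ℝ)
    (C : ∀ i, Matrix (Fin (q i)) (Fin n) ℝ)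
    (N : Fin m → Finset (Fin m))
    (hself : ∀ i, i ∈ N i)
    (lam : ℂ) (s : Finset (Fin m))
    (d : ℕ) (i₀ : Fin d → Fin m) (w : Fin d → Σ j, Fin (nd j))
    (hw : Function.Injective w)
    (hws : ∀ k, (w k).1 ∈ s)
    (hi₀ : ∀ k, i₀ k ∉ s)
    (hwN : ∀ k, (w k).1 ∈ N (i₀ k)) :
    (extPencil p q nd A B C N lam s).submatrix
      (fun r => match r with
        | Sum.inl (Sum.inl x) => Sum.inl (Sum.inl x)
        | Sum.inl (Sum.inr ir) => Sum.inr ⟨ir.1, Sum.inl ir.2⟩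
        | Sum.inr (Sum.inl z) =>
            if z.1 ∈ s ∨ lam ≠ 0 then Sum.inl (Sum.inr z) else Sum.inr ⟨z.1, Sum.inr z⟩
        | Sum.inr (Sum.inr k) => Sum.inr ⟨i₀ k, Sum.inr (w k)⟩)
      (fun c => match c with
        | Sum.inl (Sum.inl x) => Sum.inl (Sum.inl x)
        | Sum.inl (Sum.inr ic) => Sum.inr ⟨ic.1, Sum.inl ic.2⟩
        | Sum.inr (Sum.inl z) =>
            if z.1 ∈ s then Sum.inr ⟨z.1, Sum.inr z.2⟩ else Sum.inl (Sum.inr z)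
        | Sum.inr (Sum.inr k) => Sum.inl (Sum.inr (w k)))
      = fromBlocks (pencil p q A B C lam s) 0 0
          (fromBlocks
            (diagonal (fun z : Σ j, Fin (nd j) => if z.1 ∈ s ∨ lam = 0 then (1:ℂ) else lam))
            (of fun z k => if z = w k then lam else 0) 0 1) := by
  classical
  ext r c
  rcases r with (x | ⟨i, r2⟩) | (⟨j, k⟩ | k) <;>
    rcases c with (y | ⟨i', c2⟩) | (⟨j', k'⟩ | k')
  all_goals
    simp only [submatrix_apply, extPencil_eq, pencil_eq,
      Abar, Bbar, Cbar, Esel_apply, Eblk_apply,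
      fromBlocks_apply₁₁, fromBlocks_apply₁₂, fromBlocks_apply₂₁, fromBlocks_apply₂₂,
      Matrix.zero_apply, Matrix.sub_apply, Matrix.smul_apply, Matrix.one_apply,
      Matrix.map_apply, diagonal, Matrix.of_apply, ite_self, smul_eq_mul, mul_ite,
      mul_one, mul_zero]
  all_goals try rfl
  all_goals try simp
  case inl.inl.inr.inl =>
    split_ifs <;>
      simp [Bbar, Abar, Matrix.one_apply]
  case inl.inr.inr.inl =>
    split_ifs <;> simp [Cbar]
  case inr.inl.inl.inl =>
    split_ifs <;> simp [Abar, Cbar, Matrix.one_apply]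
  case inr.inl.inl.inr =>
    split_ifs <;> simp [Bbar, Cbar]
  case inr.inl.inr.inl =>
    by_cases hA : j ∈ s ∨ ¬ lam = 0 <;> by_cases hb : j' ∈ s <;>
      simp only [hA, hb, if_true, if_false, ite_true, ite_false, or_true, or_false,
        fromBlocks_apply₁₁, fromBlocks_apply₁₂, fromBlocks_apply₂₁, fromBlocks_apply₂₂]
    · -- row z, col E
      by_cases he : (⟨j, k⟩ : Σ j, Fin (nd j)) = ⟨j', k'⟩
      · cases he
        simp [hb, Eblk_apply]
      · simp only [Matrix.of_apply, if_pos hb, fromBlocks_apply₂₂, Eblk_apply, he, if_false]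
        rw [Sigma.mk.inj_iff] at he
        simp [he]
    · -- row z, col z'
      by_cases he : (⟨j, k⟩ : Σ j, Fin (nd j)) = ⟨j', k'⟩
      · cases he
        rcases hA with h | h
        · exact absurd h hb
        · simp [Matrix.one_apply, hb, h, Abar, Matrix.sub_apply]
      · rw [Sigma.mk.inj_iff] at he
        simp [Matrix.one_apply, Abar, Sum.inr.injEq, Sigma.mk.inj_iff, he, Matrix.sub_apply]
    · -- row F, col E
      push_neg at hA
      have hne : j ≠ j' := fun h => hA.1 (h ▸ hb)
      simp [hne]
    · -- row F, col z'
      push_neg at hA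
      simp only [Matrix.of_apply, if_neg hA.1, fromBlocks_apply₂₂, Esel_apply]
      by_cases he : (⟨j, k⟩ : Σ j, Fin (nd j)) = ⟨j', k'⟩
      · cases he
        simp [hself j, hA.1, hA.2]
      · rw [Sigma.mk.inj_iff] at he
        simp [Sigma.mk.inj_iff, he]
  case inr.inl.inr.inr =>
    by_cases hA : j ∈ s ∨ ¬ lam = 0 <;>
      simp only [hA, if_true, if_false, ite_true, ite_false,
        fromBlocks_apply₁₁, fromBlocks_apply₂₁]
    · by_cases he : (⟨j, k⟩ : Σ j, Fin (nd j)) = w k'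
      · simp [Matrix.one_apply, Abar, he, Matrix.sub_apply]
      · simp [Matrix.one_apply, Abar, he, Sum.inr.injEq, Matrix.sub_apply]
    · push_neg at hA
      have he : (⟨j, k⟩ : Σ j, Fin (nd j)) ≠ w k' := fun h => by
        have : j = (w k').1 := congrArg Sigma.fst h
        exact hA.1 (this ▸ hws k')
      simp only [Matrix.of_apply, if_neg hA.1, fromBlocks_apply₂₂, Esel_apply]
      simp [he]
  case inr.inr.inr.inl =>
    split_ifs with hb
    · rfl
    · simp only [fromBlocks_apply₂₁, if_neg (hi₀ k), fromBlocks_apply₂₂, Esel_apply]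
      have hne : w k ≠ ⟨j', k'⟩ := fun h => by
        have : (w k).1 = j' := congrArg Sigma.fst h
        exact hb (this ▸ hws k)
      simp [hne, Esel_apply]
  case inr.inr.inr.inr =>
    simp [hi₀ k, hwN k, hw.eq_iff]

lemma core (p q nd : Fin m → ℕ)
    (A : Matrix (Fin n) (Fin n) ℝ)
    (B : ∀ i, Matrix (Fin n) (Fin (p i)) ℝ)
    (C : ∀ i, Matrix (Fin (q i)) (Fin n) ℝ)
    (N : Fin m → Finset (Fin m))
    (hself : ∀ i, i ∈ N i)
    (lam : ℂ) (s : Finset (Fin m))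
    (d : ℕ) (i₀ : Fin d → Fin m) (w : Fin d → Σ j, Fin (nd j))
    (hw : Function.Injective w)
    (hws : ∀ k, (w k).1 ∈ s)
    (hi₀ : ∀ k, i₀ k ∉ s)
    (hwN : ∀ k, (w k).1 ∈ N (i₀ k)) :
    (pencil p q A B C lam s).rank + ((∑ i, nd i) + d)
      ≤ (extPencil p q nd A B C N lam s).rank := by
  classical
  have h := hsubmx p q nd A B C N hself lam s d i₀ w hw hws hi₀ hwN
  set S : Matrix ((Σ j, Fin (nd j)) ⊕ Fin d) ((Σ j, Fin (nd j)) ⊕ Fin d) ℂ :=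
    fromBlocks
      (diagonal (fun z : Σ j, Fin (nd j) => if z.1 ∈ s ∨ lam = 0 then (1:ℂ) else lam))
      (of fun z k => if z = w k then lam else 0) 0 1 with hSdef
  have hSunit : IsUnit S := by
    rw [hSdef, Matrix.isUnit_fromBlocks_zero₂₁]
    refine ⟨?_, isUnit_one⟩
    rw [Matrix.isUnit_diagonal]
    rw [isUnit_iff_exists_inv]
    refine ⟨fun z => (if z.1 ∈ s ∨ lam = 0 then (1:ℂ) else lam)⁻¹, ?_⟩
    funext z
    have hz : (if z.1 ∈ s ∨ lam = 0 then (1:ℂ) else lam) ≠ 0 := by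
      by_cases hz : z.1 ∈ s ∨ lam = 0
      · simp [hz]
      · push_neg at hz
        simp [hz.1, hz.2]
    exact mul_inv_cancel₀ hz
  have hSrank : S.rank = (∑ i, nd i) + d := by
    rw [Matrix.rank_of_isUnit _ hSunit]
    simp
  calc (pencil p q A B C lam s).rank + ((∑ i, nd i) + d)
      = (pencil p q A B C lam s).rank + S.rank := by rw [hSrank]
    _ ≤ (fromBlocks (pencil p q A B C lam s) 0 0 S).rank := rank_fromBlocks_diag_ge _ _
    _ ≤ (extPencil p q nd A B C N lam s).rank := by
        rw [← h]
        exact my_rank_submatrix_le _ _ _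

lemma cross (N : Fin m → Finset (Fin m))
    (hsc : ∀ i j, Relation.ReflTransGen (fun a b => a ∈ N b) i j)
    (s : Finset (Fin m)) (h1 : s.Nonempty) (h2 : s ≠ Finset.univ) :
    ∃ a b, a ∈ s ∧ b ∉ s ∧ a ∈ N b := by
  obtain ⟨j, hj⟩ := h1
  obtain ⟨i, hi⟩ : ∃ i, i ∉ s := by
    by_contra h
    push_neg at h
    exact h2 (Finset.eq_univ_iff_forall.mpr h)
  have key : ∀ b, Relation.ReflTransGen (fun a b => a ∈ N b) j b → b ∉ s →
      ∃ a c, a ∈ s ∧ c ∉ s ∧ a ∈ N c := by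
    intro b hb
    induction hb with
    | refl => intro h; exact absurd hj h
    | @tail x y hjx hxy ih =>
      intro hy
      by_cases hxs : x ∈ s
      · exact ⟨x, y, hxs, hy, hxy⟩
      · exact ih hxs
  exact key i (hsc j i) hi

lemma pencil_rank_ge (p q : Fin m → ℕ)
    (A : Matrix (Fin n) (Fin n) ℝ)
    (B : ∀ i, Matrix (Fin n) (Fin (p i)) ℝ)
    (C : ∀ i, Matrix (Fin (q i)) (Fin n) ℝ)
    (lam : ℂ) (s : Finset (Fin m))
    (h : lam ∉ spectrum ℂ (A.map Complex.ofReal)) :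
    n ≤ (pencil p q A B C lam s).rank := by
  classical
  rw [spectrum.notMem_iff] at h
  have h1 : IsUnit (lam • (1 : Matrix (Fin n) (Fin n) ℂ) - A.map Complex.ofReal) := by
    rwa [Algebra.algebraMap_eq_smul_one] at h
  have h2 : (pencil p q A B C lam s).submatrix Sum.inl Sum.inl
      = lam • (1 : Matrix (Fin n) (Fin n) ℂ) - A.map Complex.ofReal := by
    ext i j
    rfl
  calc n = ((pencil p q A B C lam s).submatrix Sum.inl Sum.inl).rank := by
        rw [h2, Matrix.rank_of_isUnit _ h1, Fintype.card_fin]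
    _ ≤ (pencil p q A B C lam s).rank := my_rank_submatrix_le _ _ _

/-- For a jointly controllable and jointly observable `m`-channel linear system
with strongly connected neighbor graph, if each local integrator dimension
`n_i` satisfies the lower bound `n_i ≥ n − min rank` of the fixed-mode pencil,
then the extended system has no fixed spectrum: the extended pencil has rank at
least `n̄ = n + Σ_i n_i` for every `λ ∈ ℂ` and every channel subset `s`. -/
theorem stmt9 {n m : ℕ} (p q nd : Fin m → ℕ)
    (A : Matrix (Fin n) (Fin n) ℝ)
    (B : ∀ i, Matrix (Fin n) (Fin (p i)) ℝ)
    (C : ∀ i, Matrix (Fin (q i)) (Fin n) ℝ)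
    (N : Fin m → Finset (Fin m))
    (hself : ∀ i, i ∈ N i)
    (hsc : ∀ i j, Relation.ReflTransGen (fun a b => a ∈ N b) i j)
    -- joint controllability: rank [λI − A, B] = n for all λ
    (hctrb : ∀ lam : ℂ, (pencil p q A B C lam Finset.univ).rank = n)
    -- joint observability: rank [λI − A; C] = n for all λ
    (hobs : ∀ lam : ℂ, (pencil p q A B C lam ∅).rank = n)
    -- n_i ≥ n − min_{s, λ ∈ σ(A)} rank [λI − A, B_s; C_{m−s}, 0]
    (hbound : ∀ i, ∀ (s : Finset (Fin m)) (lam : ℂ),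
      lam ∈ spectrum ℂ (A.map Complex.ofReal) →
      n - (pencil p q A B C lam s).rank ≤ nd i) :
    ∀ (lam : ℂ) (s : Finset (Fin m)),
      n + ∑ i, nd i ≤ (extPencil p q nd A B C N lam s).rank := by
  classical
  intro lam s
  have hcore0 : (pencil p q A B C lam s).rank + ((∑ i, nd i) + 0)
      ≤ (extPencil p q nd A B C N lam s).rank :=
    core p q nd A B C N hself lam s 0 Fin.elim0 Fin.elim0
      (fun k => k.elim0) (fun k => k.elim0) (fun k => k.elim0) (fun k => k.elim0)
  by_cases hs1 : s = ∅
  · subst hs1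
    have := hobs lam
    omega
  by_cases hs2 : s = Finset.univ
  · subst hs2
    have := hctrb lam
    omega
  by_cases hsp : lam ∈ spectrum ℂ (A.map Complex.ofReal)
  · obtain ⟨a, b, has, hbs, hab⟩ :=
      cross N hsc s (Finset.nonempty_iff_ne_empty.mpr hs1) hs2
    have hcore : (pencil p q A B C lam s).rank + ((∑ i, nd i) + nd a)
        ≤ (extPencil p q nd A B C N lam s).rank :=
      core p q nd A B C N hself lam s (nd a) (fun _ => b) (fun k => ⟨a, k⟩)
        (fun k k' h => by simpa [Sigma.mk.inj_iff] using h) (fun k => has) (fun k => hbs) (fun k => hab)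
    have hb := hbound a s lam hsp
    omega
  · have := pencil_rank_ge p q A B C lam s hsp
    omega
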